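/- Let T be a condensation tree over a linear order α and let I be a nonempty convex subset of α. Then T|_I := {I ∩ J : J ∈ T, I ∩ J ≠ ∅} is a condensation tree over I (with the induced order); moreover rank(T|_I) ≤ rank(T), and for every nonempty convex subset J of I, (T|_I)|_J = T|_J. -/

import Mathlib

section Trees

variable {α : Type}

/-- `I < J` pointwise, for subsets of a linear order. -/
def SetLT [LinearOrder α] (I J : Set α) : Prop := ∀ x ∈ I, ∀ y ∈ J, x < y

/-- `I` is a convex subset of the suborder induced on `R`. -/
def ConvexIn [LinearOrder α] (R I : Set α) : Prop :=
  ∀ x ∈ I, ∀ y ∈ I, ∀ z ∈ R, x < z → z < y → z ∈ I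

/-- `T` is a condensation tree over the suborder induced on `R`:
a set of nonempty convex subsets of `R` containing the root `R`, pairwise
comparable-or-disjoint, such that the union of the members properly contained
in a given member is that member or empty, and all chains are finite. -/
structure IsCondTreeOn [LinearOrder α] (R : Set α) (T : Set (Set α)) : Prop where
  root_mem : R ∈ T
  mem_subset : ∀ I ∈ T, I ⊆ R
  mem_nonempty : ∀ I ∈ T, I.Nonempty
  mem_convex : ∀ I ∈ T, ConvexIn R I
  comparable_or_disjoint : ∀ I ∈ T, ∀ J ∈ T, I ⊆ J ∨ J ⊆ I ∨ I ∩ J = ∅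
  children_union : ∀ I ∈ T,
    ⋃₀ {J | J ∈ T ∧ J ⊂ I} = I ∨ ⋃₀ {J | J ∈ T ∧ J ⊂ I} = ∅
  chains_finite : ∀ C ⊆ T, IsChain (· ⊆ ·) C → C.Finite

/-- A leaf of `T`: a member minimal with respect to inclusion. -/
def IsLeafOf (T : Set (Set α)) (I : Set α) : Prop :=
  I ∈ T ∧ ∀ J ∈ T, J ⊆ I → J = I

/-- `J` is a child of `I` in `T`: a maximal member of `T` properly contained in `I`. -/
def IsChildOf (T : Set (Set α)) (J I : Set α) : Prop :=
  J ∈ T ∧ J ⊂ I ∧ ∀ K ∈ T, J ⊂ K → I ⊆ K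

end Trees
/-- The restriction `T|_I = {I ∩ J : J ∈ T, I ∩ J ≠ ∅}` of a condensation tree
to a convex subset `I`. -/
def restrictTree {α : Type} (T : Set (Set α)) (I : Set α) : Set (Set α) :=
  {K | ∃ J ∈ T, K = I ∩ J ∧ (I ∩ J).Nonempty}

open Classical in
/-- The rank of the condensation tree `T` with root `R`, defined by
well-founded recursion on the (well-founded, since all chains in `T` are
finite) child relation: the rank of a leaf is `0` and the rank of an internal
node is the supremum of `rank + 1` over its children. -/
noncomputable def treeRank {α : Type} [LinearOrder α] (R : Set α)
    (T : Set (Set α)) : Ordinal :=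
  if h : R ∈ T ∧
      WellFounded (fun J I : {J : Set α // J ∈ T} => IsChildOf T J.1 I.1) then
    (h.2.apply (⟨R, h.1⟩ : {J : Set α // J ∈ T})).rank
  else 0

section Aux

variable {α : Type} [LinearOrder α]

lemma CT.comp {R : Set α} {T : Set (Set α)} (hT : IsCondTreeOn R T)
    {A B : Set α} (hA : A ∈ T) (hB : B ∈ T) (hne : (A ∩ B).Nonempty) :
    A ⊆ B ∨ B ⊆ A := by
  rcases hT.comparable_or_disjoint A hA B hB with h | h | h
  · exact Or.inl h
  · exact Or.inr h
  · exact absurd h hne.ne_empty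

lemma CT.wf {R : Set α} {T : Set (Set α)} (hT : IsCondTreeOn R T) :
    WellFounded (fun J I : {J : Set α // J ∈ T} => IsChildOf T J.1 I.1) := by
  have hlt : WellFounded (fun J I : {J : Set α // J ∈ T} => J < I) := by
    rw [RelEmbedding.wellFounded_iff_isEmpty]
    by_contra h
    rw [not_isEmpty_iff] at h
    obtain ⟨f⟩ := h
    set g : ℕ → Set α := fun n => (f n).1 with hg
    have hanti : StrictAnti g := strictAnti_nat_of_succ_lt fun n => by
      have : f (n + 1) < f n := f.map_rel_iff.2 (Nat.lt_succ_self n)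
      exact this
    have hchain : IsChain (· ⊆ ·) (Set.range g) := by
      rintro _ ⟨m, rfl⟩ _ ⟨n, rfl⟩ _
      rcases lt_trichotomy m n with h | h | h
      · exact Or.inr (hanti h).le
      · exact Or.inl (h ▸ subset_rfl)
      · exact Or.inl (hanti h).le
    have hsub : Set.range g ⊆ T := by rintro _ ⟨n, rfl⟩; exact (f n).2
    exact (Set.infinite_range_of_injective hanti.injective)
      (hT.chains_finite _ hsub hchain)
  exact Subrelation.wf (fun {x y} h => h.2.1) hlt

lemma CT.exists_child {R : Set α} {T : Set (Set α)} (hT : IsCondTreeOn R T)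
    {x y : Set α} (hx : x ∈ T) (hy : y ∈ T) (hxy : x ⊂ y) :
    ∃ M, IsChildOf T M y ∧ x ⊆ M := by
  obtain ⟨a, ha⟩ := hT.mem_nonempty x hx
  set S : Set (Set α) := {K | K ∈ T ∧ x ⊆ K ∧ K ⊂ y} with hS
  have hSchain : IsChain (· ⊆ ·) S := fun A hA B hB _ =>
    CT.comp hT hA.1 hB.1 ⟨a, hA.2.1 ha, hB.2.1 ha⟩
  have hSfin : S.Finite := hT.chains_finite S (fun K hK => hK.1) hSchain
  obtain ⟨M, hM, hMmax⟩ := hSfin.exists_maximalFor id S ⟨x, hx, subset_rfl, hxy⟩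
  refine ⟨M, ⟨hM.1, hM.2.2, ?_⟩, hM.2.1⟩
  intro K hK hMK
  have hKy : K ⊆ y ∨ y ⊆ K :=
    CT.comp hT hK hy ⟨a, hMK.subset (hM.2.1 ha), hM.2.2.subset (hM.2.1 ha)⟩
  rcases hKy with h | h
  · rcases h.eq_or_ssubset with rfl | h'
    · exact subset_rfl
    · have hKS : K ∈ S := ⟨hK, (hM.2.1.trans hMK.subset), h'⟩
      exact absurd (hMmax hKS hMK.subset) hMK.not_subset
  · exact h

lemma CT.rank_mono {R : Set α} {T : Set (Set α)} (hT : IsCondTreeOn R T)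
    (hwf : WellFounded (fun J I : {J : Set α // J ∈ T} => IsChildOf T J.1 I.1)) :
    ∀ y x : {J : Set α // J ∈ T}, x.1 ⊆ y.1 →
      (hwf.apply x).rank ≤ (hwf.apply y).rank := by
  intro y
  refine hwf.induction (C := fun y => ∀ x : {J : Set α // J ∈ T}, x.1 ⊆ y.1 →
    (hwf.apply x).rank ≤ (hwf.apply y).rank) y ?_
  intro y ih x hxy
  rcases hxy.eq_or_ssubset with h | h
  · have : x = y := Subtype.ext h
    exact this ▸ le_rfl
  · obtain ⟨M, hM, hxM⟩ := CT.exists_child hT x.2 y.2 h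
    have h1 : (hwf.apply x).rank ≤ (hwf.apply ⟨M, hM.1⟩).rank := ih ⟨M, hM.1⟩ hM x hxM
    have h2 : (hwf.apply ⟨M, hM.1⟩).rank < (hwf.apply y).rank := by
      have := Acc.rank_lt_of_rel (hwf.apply y) (a := ⟨M, hM.1⟩) hM
      exact this
    exact h1.trans h2.le

lemma CT.rank_lt {R : Set α} {T : Set (Set α)} (hT : IsCondTreeOn R T)
    (hwf : WellFounded (fun J I : {J : Set α // J ∈ T} => IsChildOf T J.1 I.1))
    {x y : {J : Set α // J ∈ T}} (h : x.1 ⊂ y.1) :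
    (hwf.apply x).rank < (hwf.apply y).rank := by
  obtain ⟨M, hM, hxM⟩ := CT.exists_child hT x.2 y.2 h
  have h1 := CT.rank_mono hT hwf ⟨M, hM.1⟩ x hxM
  have h2 : (hwf.apply (⟨M, hM.1⟩ : {J : Set α // J ∈ T})).rank < (hwf.apply y).rank :=
    Acc.rank_lt_of_rel (hwf.apply y) hM
  exact h1.trans_lt h2

end Aux

section Main

variable {α : Type} [LinearOrder α]

lemma CT.restrict {T : Set (Set α)} (hT : IsCondTreeOn Set.univ T)
    {I : Set α} (hne : I.Nonempty) :
    IsCondTreeOn I (restrictTree T I) := by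
  constructor
  · -- root_mem
    exact ⟨Set.univ, hT.root_mem, (Set.inter_univ I).symm,
      by rw [Set.inter_univ]; exact hne⟩
  · -- mem_subset
    rintro K ⟨J, hJ, rfl, hKne⟩
    exact Set.inter_subset_left
  · -- mem_nonempty
    rintro K ⟨J, hJ, rfl, hKne⟩
    exact hKne
  · -- mem_convex
    rintro K ⟨J, hJ, rfl, hKne⟩
    intro x hx y hy z hz hxz hzy
    exact ⟨hz, hT.mem_convex J hJ x hx.2 y hy.2 z (Set.mem_univ z) hxz hzy⟩
  · -- comparable_or_disjoint
    rintro K₁ ⟨J₁, hJ₁, rfl, h₁⟩ K₂ ⟨J₂, hJ₂, rfl, h₂⟩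
    rcases hT.comparable_or_disjoint J₁ hJ₁ J₂ hJ₂ with h | h | h
    · exact Or.inl (Set.inter_subset_inter_right I h)
    · exact Or.inr (Or.inl (Set.inter_subset_inter_right I h))
    · refine Or.inr (Or.inr ?_)
      apply Set.eq_empty_of_subset_empty
      intro a ha
      rw [← h]
      exact ⟨ha.1.2, ha.2.2⟩
  · -- children_union
    rintro K ⟨J, hJ, rfl, hKne⟩
    obtain ⟨a, ha⟩ := hKne
    set S : Set (Set α) := {J' | J' ∈ T ∧ I ∩ J' = I ∩ J} with hSdef
    have haS : ∀ J' ∈ S, a ∈ J' := by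
      intro J' hJ'
      have : a ∈ I ∩ J' := hJ'.2.symm ▸ ha
      exact this.2
    have hSchain : IsChain (· ⊆ ·) S := fun A hA B hB _ =>
      CT.comp hT hA.1 hB.1 ⟨a, haS A hA, haS B hB⟩
    have hSfin : S.Finite := hT.chains_finite S (fun K hK => hK.1) hSchain
    obtain ⟨J₀, hJ₀, hJ₀min⟩ := hSfin.exists_minimalFor id S ⟨J, hJ, rfl⟩
    have hmin : ∀ J' ∈ S, J₀ ⊆ J' := by
      intro J' hJ'
      rcases eq_or_ne J' J₀ with rfl | hne'
      · exact subset_rfl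
      · rcases hSchain hJ' hJ₀ hne' with h | h
        · have he' : J₀ = J' := (h.antisymm (hJ₀min hJ' h)).symm
          exact he'.le
        · exact h
    rcases hT.children_union J₀ hJ₀.1 with hu | hu
    · left
      apply Set.Subset.antisymm
      · exact Set.sUnion_subset fun K' hK' => hK'.2.subset
      · intro x hx
        have hx0 : x ∈ I ∩ J₀ := hJ₀.2.symm ▸ hx
        have : x ∈ ⋃₀ {J' | J' ∈ T ∧ J' ⊂ J₀} := hu.symm ▸ hx0.2
        obtain ⟨J', ⟨hJ'T, hJ'ss⟩, hxJ'⟩ := this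
        have hxK' : x ∈ I ∩ J' := ⟨hx0.1, hxJ'⟩
        have hsub : I ∩ J' ⊆ I ∩ J := by
          rw [← hJ₀.2]
          exact Set.inter_subset_inter_right I hJ'ss.subset
        have hK'ss : I ∩ J' ⊂ I ∩ J := by
          refine hsub.ssubset_of_ne fun he => ?_
          exact hJ'ss.not_subset (hmin J' ⟨hJ'T, he⟩)
        exact Set.mem_sUnion.2 ⟨I ∩ J', ⟨⟨J', hJ'T, rfl, ⟨x, hxK'⟩⟩, hK'ss⟩, hxK'⟩
    · right
      rw [Set.sUnion_eq_empty]
      rintro K' ⟨⟨J', hJ', rfl, hK'ne⟩, hK'ss⟩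
      exfalso
      obtain ⟨b, hb⟩ := hK'ne
      have hbJ : b ∈ I ∩ J := hK'ss.subset hb
      have hbJ₀ : b ∈ I ∩ J₀ := hJ₀.2.symm ▸ hbJ
      rcases CT.comp hT hJ' hJ₀.1 ⟨b, hb.2, hbJ₀.2⟩ with h | h
      · have hne' : J' ≠ J₀ := by
          rintro rfl
          exact hK'ss.ne hJ₀.2
        obtain ⟨c, hc⟩ := hT.mem_nonempty J' hJ'
        have : c ∈ ⋃₀ {K | K ∈ T ∧ K ⊂ J₀} :=
          Set.mem_sUnion.2 ⟨J', ⟨hJ', h.ssubset_of_ne hne'⟩, hc⟩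
        rw [hu] at this
        exact this
      · exact hK'ss.not_subset (by
          rw [← hJ₀.2]
          exact Set.inter_subset_inter_right I h)
  · -- chains_finite
    intro C hC hchain
    classical
    set f : Set α → Set α := fun K => if h : ∃ J ∈ T, I ∩ J = K then h.choose else ∅
      with hf
    have hf1 : ∀ K ∈ C, f K ∈ T ∧ I ∩ f K = K := by
      intro K hK
      obtain ⟨J, hJ, hKeq, hne'⟩ := hC hK
      have hex : ∃ J ∈ T, I ∩ J = K := ⟨J, hJ, hKeq.symm⟩
      rw [hf]
      simp only [dif_pos hex]
      exact ⟨hex.choose_spec.1, hex.choose_spec.2⟩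
    have hCne : ∀ K ∈ C, K.Nonempty := by
      intro K hK
      obtain ⟨J, hJ, hKeq, hne'⟩ := hC hK
      exact hKeq ▸ hne'
    have himchain : IsChain (· ⊆ ·) (f '' C) := by
      rintro _ ⟨K₁, hK₁, rfl⟩ _ ⟨K₂, hK₂, rfl⟩ hneq
      have hK12 : K₁ ≠ K₂ := fun e => hneq (e ▸ rfl)
      have hcomp : K₁ ⊆ K₂ ∨ K₂ ⊆ K₁ := hchain hK₁ hK₂ hK12
      have h1 := hf1 K₁ hK₁
      have h2 := hf1 K₂ hK₂
      rcases hcomp with h | h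
      · obtain ⟨b, hb⟩ := hCne K₁ hK₁
        exact CT.comp hT h1.1 h2.1
          ⟨b, (h1.2.symm ▸ hb : b ∈ I ∩ f K₁).2, (h2.2.symm ▸ h hb : b ∈ I ∩ f K₂).2⟩
      · obtain ⟨b, hb⟩ := hCne K₂ hK₂
        exact CT.comp hT h1.1 h2.1
          ⟨b, (h1.2.symm ▸ h hb : b ∈ I ∩ f K₁).2, (h2.2.symm ▸ hb : b ∈ I ∩ f K₂).2⟩
    have himfin : (f '' C).Finite :=
      hT.chains_finite _ (by rintro _ ⟨K, hK, rfl⟩; exact (hf1 K hK).1) himchain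
    refine Set.Finite.of_finite_image himfin ?_
    intro K₁ hK₁ K₂ hK₂ he
    rw [← (hf1 K₁ hK₁).2, ← (hf1 K₂ hK₂).2, he]

lemma CT.rank_restrict {T : Set (Set α)} (hT : IsCondTreeOn Set.univ T)
    {I : Set α} (h1 : IsCondTreeOn I (restrictTree T I))
    (hwf1 : WellFounded (fun J K : {J : Set α // J ∈ restrictTree T I} =>
      IsChildOf (restrictTree T I) J.1 K.1))
    (hwf : WellFounded (fun J K : {J : Set α // J ∈ T} => IsChildOf T J.1 K.1)) :
    ∀ k : {J : Set α // J ∈ restrictTree T I}, ∀ j : {J : Set α // J ∈ T},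
      I ∩ j.1 = k.1 → (hwf1.apply k).rank ≤ (hwf.apply j).rank := by
  intro k
  refine hwf1.induction
    (C := fun k => ∀ j : {J : Set α // J ∈ T}, I ∩ j.1 = k.1 →
      (hwf1.apply k).rank ≤ (hwf.apply j).rank) k ?_
  intro k ih j hj
  rw [Acc.rank_eq]
  apply Ordinal.iSup_le
  rintro ⟨b, hb⟩
  rw [Order.succ_le_iff]
  obtain ⟨J', hJ'T, hbeq, hbne⟩ := b.2
  have hbk : b.1 ⊂ k.1 := hb.2.1
  have hbmem : ∀ x ∈ b.1, x ∈ I ∩ J' := fun x hx => hbeq ▸ hx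
  obtain ⟨c, hc⟩ : b.1.Nonempty := hbeq.symm ▸ hbne
  have hcj : c ∈ I ∩ j.1 := hj.symm ▸ hbk.subset hc
  have hcomp := CT.comp hT hJ'T j.2 ⟨c, (hbmem c hc).2, hcj.2⟩
  have hsub : J' ⊂ j.1 := by
    rcases hcomp with h | h
    · refine h.ssubset_of_ne fun he => ?_
      apply hbk.ne
      rw [hbeq, he, hj]
    · exfalso
      apply hbk.not_subset
      rw [← hj, hbeq]
      exact Set.inter_subset_inter_right I h
  have h2 : (hwf.apply ⟨J', hJ'T⟩).rank < (hwf.apply j).rank :=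
    CT.rank_lt hT hwf hsub
  have h3 := ih b hb ⟨J', hJ'T⟩ hbeq.symm
  exact h3.trans_lt h2

end Main

/-- if `T` is a condensation tree over the linear order `α` and
`I` is a nonempty convex subset of `α`, then `T|_I` is a condensation tree over
`I`, its rank is at most the rank of `T`, and `(T|_I)|_J = T|_J` for every
nonempty convex subset `J` of `I`. -/
theorem restrict_condensation_tree {α : Type} [LinearOrder α]
    (T : Set (Set α)) (hT : IsCondTreeOn Set.univ T)
    (I : Set α) (hne : I.Nonempty) (hconv : ConvexIn Set.univ I) :
    IsCondTreeOn I (restrictTree T I) ∧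
    treeRank I (restrictTree T I) ≤ treeRank Set.univ T ∧
    ∀ J : Set α, J ⊆ I → J.Nonempty → ConvexIn I J →
      restrictTree (restrictTree T I) J = restrictTree T J := by
  have h1 : IsCondTreeOn I (restrictTree T I) := CT.restrict hT hne
  refine ⟨h1, ?_, ?_⟩
  · have hwf := CT.wf hT
    have hwf1 := CT.wf h1
    have hcT : Set.univ ∈ T ∧
        WellFounded (fun J K : {J : Set α // J ∈ T} => IsChildOf T J.1 K.1) :=
      ⟨hT.root_mem, hwf⟩
    have hcI : I ∈ restrictTree T I ∧
        WellFounded (fun J K : {J : Set α // J ∈ restrictTree T I} =>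
          IsChildOf (restrictTree T I) J.1 K.1) :=
      ⟨h1.root_mem, hwf1⟩
    unfold treeRank
    rw [dif_pos hcI, dif_pos hcT]
    exact CT.rank_restrict hT h1 hcI.2 hcT.2 ⟨I, hcI.1⟩ ⟨Set.univ, hcT.1⟩
      (Set.inter_univ I)
  · intro J hJI hJne hJconv
    ext K
    constructor
    · rintro ⟨K', ⟨L, hL, rfl, hne'⟩, rfl, hKne⟩
      have he : J ∩ (I ∩ L) = J ∩ L := by
        rw [← Set.inter_assoc, Set.inter_eq_self_of_subset_left hJI]
      exact ⟨L, hL, he, by rw [← he]; exact hKne⟩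
    · rintro ⟨L, hL, rfl, hKne⟩
      have he : J ∩ (I ∩ L) = J ∩ L := by
        rw [← Set.inter_assoc, Set.inter_eq_self_of_subset_left hJI]
      refine ⟨I ∩ L, ⟨L, hL, rfl, ?_⟩, he.symm, by rw [he]; exact hKne⟩
      obtain ⟨a, ha⟩ := hKne
      exact ⟨a, hJI ha.1, ha.2⟩
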